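/- arXiv:2104.10841 — 6 statements merged into one kernel-verified Lean document; each statement's English description precedes it below -/
import Mathlib

section
/- If every point of a nonempty subset K of ℝ^m has a unique best approximation in K (i.e., K is a Chebyshev set in ℝ^m), then K is closed and convex; conversely every nonempty closed convex subset of ℝ^m is a Chebyshev set. -/
open Filter Topology Metric RealInnerProductSpace Bornology

set_option maxHeartbeats 1600000


variable {m : ℕ}

lemma cheb_closed {K : Set (EuclideanSpace ℝ (Fin m))}
    (hC : ∀ b, ∃ y ∈ K, ∀ z ∈ K, ‖y - b‖ ≤ ‖z - b‖) : IsClosed K := by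
  apply isClosed_of_closure_subset
  intro b hb
  obtain ⟨y, hyK, hy⟩ := hC b
  have hn : ‖y - b‖ = 0 := by
    by_contra h
    have hpos : 0 < ‖y - b‖ := lt_of_le_of_ne (norm_nonneg _) (Ne.symm h)
    obtain ⟨z, hzK, hz⟩ := Metric.mem_closure_iff.1 hb _ hpos
    have h2 := hy z hzK
    rw [dist_comm, dist_eq_norm] at hz
    linarith
  have hyb : y - b = 0 := by rwa [norm_eq_zero] at hn
  exact sub_eq_zero.mp hyb ▸ hyK

/-- Sequential continuity of the metric projection of a Chebyshev set. -/
lemma cheb_proj_tendsto {K : Set (EuclideanSpace ℝ (Fin m))} (hcl : IsClosed K)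
    (P : EuclideanSpace ℝ (Fin m) → EuclideanSpace ℝ (Fin m))
    (hPK : ∀ b, P b ∈ K) (hPle : ∀ b, ∀ z ∈ K, ‖P b - b‖ ≤ ‖z - b‖)
    (hPu : ∀ b y, y ∈ K → (∀ z ∈ K, ‖y - b‖ ≤ ‖z - b‖) → y = P b)
    {x : EuclideanSpace ℝ (Fin m)} {z : ℕ → EuclideanSpace ℝ (Fin m)}
    (hz : Tendsto z atTop (𝓝 x)) :
    Tendsto (fun n => P (z n)) atTop (𝓝 (P x)) := by
  apply tendsto_of_subseq_tendsto
  intro ns hns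
  set w : ℕ → EuclideanSpace ℝ (Fin m) := fun n => z (ns n) with hw
  have hwx : Tendsto w atTop (𝓝 x) := hz.comp hns
  have hdist : Tendsto (fun n => ‖w n - x‖) atTop (𝓝 (0:ℝ)) := by
    have h1 : Tendsto (fun n => w n - x) atTop (𝓝 (x - x)) :=
      hwx.sub tendsto_const_nhds
    rw [sub_self] at h1
    simpa using h1.norm
  obtain ⟨C, hC⟩ := hdist.bddAbove_range
  have hCb : ∀ n, ‖w n - x‖ ≤ C := fun n => hC ⟨n, rfl⟩
  set R : ℝ := ‖P x - x‖ + 2 * C with hR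
  have hmem : ∀ n, P (w n) ∈ K ∩ closedBall x R := by
    intro n
    refine ⟨hPK _, ?_⟩
    rw [mem_closedBall, dist_eq_norm]
    have t1 : ‖P (w n) - x‖ ≤ ‖P (w n) - w n‖ + ‖w n - x‖ := by
      have := dist_triangle (P (w n)) (w n) x
      simpa [dist_eq_norm] using this
    have t2 : ‖P (w n) - w n‖ ≤ ‖P x - w n‖ := hPle (w n) (P x) (hPK x)
    have t3 : ‖P x - w n‖ ≤ ‖P x - x‖ + ‖x - w n‖ := by
      have := dist_triangle (P x) x (w n)
      simpa [dist_eq_norm] using this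
    have t4 : ‖x - w n‖ = ‖w n - x‖ := norm_sub_rev _ _
    have t5 := hCb n
    simp only [hR]
    linarith
  have hbdd : IsBounded (K ∩ closedBall x R) :=
    (isBounded_closedBall).subset Set.inter_subset_right
  obtain ⟨a, ha, φ, hφ, haf⟩ := tendsto_subseq_of_bounded hbdd hmem
  have haK : a ∈ K := by
    have hsub : closure (K ∩ closedBall x R) ⊆ K :=
      Set.Subset.trans (closure_mono Set.inter_subset_left) hcl.closure_subset
    exact hsub ha
  have hwφ : Tendsto (fun n => w (φ n)) atTop (𝓝 x) := hwx.comp hφ.tendsto_atTop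
  have hbest : ∀ q ∈ K, ‖a - x‖ ≤ ‖q - x‖ := by
    intro q hq
    have h1 : Tendsto (fun n => ‖P (w (φ n)) - w (φ n)‖) atTop (𝓝 ‖a - x‖) :=
      (haf.sub hwφ).norm
    have h2 : Tendsto (fun n => ‖q - w (φ n)‖) atTop (𝓝 ‖q - x‖) :=
      (tendsto_const_nhds.sub hwφ).norm
    exact le_of_tendsto_of_tendsto' h1 h2 fun n => hPle _ q hq
  have hax : a = P x := hPu x a haK hbest
  exact ⟨φ, hax ▸ haf⟩

lemma cheb_key {K : Set (EuclideanSpace ℝ (Fin m))}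
    (P : EuclideanSpace ℝ (Fin m) → EuclideanSpace ℝ (Fin m))
    (hPle : ∀ b, ∀ z ∈ K, ‖P b - b‖ ≤ ‖z - b‖)
    (x y : EuclideanSpace ℝ (Fin m)) (hy : y ∈ K) :
    ⟪x, y⟫ - ‖y‖^2/2 ≤ ⟪x, P x⟫ - ‖P x‖^2/2 := by
  have h := hPle x y hy
  have h2 : ‖P x - x‖^2 ≤ ‖y - x‖^2 := pow_le_pow_left₀ (norm_nonneg _) h 2
  have e1 : ‖P x - x‖^2 = ‖P x‖^2 - 2*⟪P x, x⟫ + ‖x‖^2 := norm_sub_sq_real _ _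
  have e2 : ‖y - x‖^2 = ‖y‖^2 - 2*⟪y, x⟫ + ‖x‖^2 := norm_sub_sq_real _ _
  have c1 : ⟪P x, x⟫ = ⟪x, P x⟫ := real_inner_comm _ _
  have c2 : ⟪y, x⟫ = ⟪x, y⟫ := real_inner_comm _ _
  linarith

lemma cheb_convex {K : Set (EuclideanSpace ℝ (Fin m))} (hcl : IsClosed K)
    (P : EuclideanSpace ℝ (Fin m) → EuclideanSpace ℝ (Fin m))
    (hPK : ∀ b, P b ∈ K) (hPle : ∀ b, ∀ z ∈ K, ‖P b - b‖ ≤ ‖z - b‖)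
    (hPu : ∀ b y, y ∈ K → (∀ z ∈ K, ‖y - b‖ ≤ ‖z - b‖) → y = P b) :
    Convex ℝ K := by
  rw [← convexHull_eq_self]
  refine Set.Subset.antisymm ?_ (subset_convexHull ℝ K)
  intro y₀ hy₀
  haveI : Nonempty K := ⟨⟨P 0, hPK 0⟩⟩
  set f : EuclideanSpace ℝ (Fin m) → ℝ := fun x => ‖x‖^2/2 - (infDist x K)^2/2 with hf
  have hPdist : ∀ x, infDist x K = ‖P x - x‖ := by
    intro x
    refine le_antisymm ?_ ?_
    · have h1 := infDist_le_dist_of_mem (x := x) (hPK x)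
      rwa [dist_eq_norm, norm_sub_rev] at h1
    · rw [infDist_eq_iInf]
      refine le_ciInf fun q => ?_
      rw [dist_eq_norm]
      calc ‖P x - x‖ ≤ ‖(q : EuclideanSpace ℝ (Fin m)) - x‖ := hPle x q q.2
        _ = ‖x - (q : EuclideanSpace ℝ (Fin m))‖ := norm_sub_rev _ _
  have hfP : ∀ x, f x = ⟪x, P x⟫ - ‖P x‖^2/2 := by
    intro x
    have e1 : ‖P x - x‖^2 = ‖P x‖^2 - 2*⟪P x, x⟫ + ‖x‖^2 := norm_sub_sq_real _ _
    have c1 : ⟪P x, x⟫ = ⟪x, P x⟫ := real_inner_comm _ _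
    simp only [hf, hPdist x]
    linarith
  have hkey : ∀ x, ∀ y ∈ K, ⟪x, y⟫ - ‖y‖^2/2 ≤ f x := fun x y hy =>
    (cheb_key P hPle x y hy).trans_eq (hfP x).symm
  have hfc : Continuous f := by
    apply Continuous.sub
    · exact (continuous_norm.pow 2).div_const 2
    · exact ((continuous_infDist_pt K).pow 2).div_const 2
  obtain ⟨ι, hι, wt, pt, hw0, hw1, hptK, hsum⟩ := mem_convexHull_iff_exists_fintype.1 hy₀
  set Cc : ℝ := ∑ i, wt i * (‖pt i‖^2/2) with hCc
  have hlb : ∀ x, ⟪x, y₀⟫ - Cc ≤ f x := by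
    intro x
    have h1 : ∑ i, wt i * (⟪x, pt i⟫ - ‖pt i‖^2/2) ≤ ∑ i, wt i * f x :=
      Finset.sum_le_sum fun i _ => mul_le_mul_of_nonneg_left (hkey x _ (hptK i)) (hw0 i)
    have h2 : ∑ i, wt i * f x = f x := by rw [← Finset.sum_mul, hw1, one_mul]
    have h3 : ⟪x, y₀⟫ = ∑ i, wt i * ⟪x, pt i⟫ := by
      rw [← hsum, inner_sum]
      exact Finset.sum_congr rfl fun i _ => real_inner_smul_right _ _ _
    have h4 : ∑ i, wt i * (⟪x, pt i⟫ - ‖pt i‖^2/2) = (∑ i, wt i * ⟪x, pt i⟫) - Cc := by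
      rw [hCc, ← Finset.sum_sub_distrib]
      exact Finset.sum_congr rfl fun i _ => by ring
    linarith
  have main : ∀ ε : ℝ, 0 < ε → ∃ p ∈ K, ‖p - y₀‖ ≤ 2*ε := by
    intro ε hε
    set q : EuclideanSpace ℝ (Fin m) → ℝ := fun x => f x - ⟪x, y₀⟫ with hq
    have hqlb : ∀ x, -Cc ≤ q x := by
      intro x
      have := hlb x
      simp only [hq]
      linarith
    have hbdd : BddBelow (Set.range q) := ⟨-Cc, by rintro r ⟨x, rfl⟩; exact hqlb x⟩
    set μ : ℝ := ⨅ x, q x with hμ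
    have hμle : ∀ x, μ ≤ q x := fun x => ciInf_le hbdd x
    obtain ⟨x₀, hx₀⟩ : ∃ x₀, q x₀ < μ + ε := exists_lt_of_ciInf_lt (lt_add_of_pos_right μ hε)
    set g : EuclideanSpace ℝ (Fin m) → ℝ := fun x => q x + ε * ‖x - x₀‖^2 with hg
    have hqc : Continuous q := hfc.sub (continuous_id.inner continuous_const)
    have hgc : Continuous g :=
      hqc.add (continuous_const.mul (((continuous_id.sub continuous_const).norm).pow 2))
    set R : ℝ := (q x₀ - μ)/ε + 1 with hRdef
    have hR1 : 1 ≤ R := by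
      have h0 : 0 ≤ (q x₀ - μ)/ε := div_nonneg (by linarith [hμle x₀]) hε.le
      simp only [hRdef]
      linarith
    have hεR : ε * R = (q x₀ - μ) + ε := by
      simp only [hRdef]
      field_simp
    have hout : ∀ x, R ≤ ‖x - x₀‖ → g x₀ < g x := by
      intro x hx
      have h1 : μ + ε * R^2 ≤ g x := by
        have h2 : ε * R^2 ≤ ε * ‖x - x₀‖^2 :=
          mul_le_mul_of_nonneg_left (pow_le_pow_left₀ (by linarith) hx 2) hε.le
        have h3 := hμle x
        simp only [hg]
        linarith
      have hRR : R ≤ R^2 := by nlinarith [sq_nonneg (R - 1)]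
      have h2 : ε * R ≤ ε * R^2 := mul_le_mul_of_nonneg_left hRR hε.le
      have h3 : g x₀ = q x₀ := by simp [hg]
      linarith
    have hball : (closedBall x₀ R).Nonempty := ⟨x₀, mem_closedBall_self (by linarith)⟩
    obtain ⟨xs, hxsB, hxsmin⟩ :=
      (isCompact_closedBall x₀ R).exists_isMinOn hball hgc.continuousOn
    have hgmin : ∀ x, g xs ≤ g x := by
      intro x
      by_cases hx : x ∈ closedBall x₀ R
      · exact hxsmin hx
      · have hxR : R ≤ ‖x - x₀‖ := by
          rw [mem_closedBall, dist_eq_norm, not_le] at hx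
          exact hx.le
        have h1 : g xs ≤ g x₀ := hxsmin (mem_closedBall_self (by linarith))
        exact h1.trans (hout x hxR).le
    have hxs1 : ‖xs - x₀‖ ≤ 1 := by
      have h1 : g xs ≤ g x₀ := hgmin x₀
      have h2 : g x₀ = q x₀ := by simp [hg]
      have h3 : q xs + ε * ‖xs - x₀‖^2 ≤ q x₀ := by
        simp only [hg, sub_self, norm_zero] at h1
        simpa using h1
      have h4 : ε * ‖xs - x₀‖^2 < ε := by
        have := hμle xs
        linarith
      have h5 : ‖xs - x₀‖^2 < 1 := by nlinarith
      nlinarith [norm_nonneg (xs - x₀)]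
    set v : EuclideanSpace ℝ (Fin m) := P xs - y₀ with hv
    have ht : ∀ t : ℝ, 0 < t → ⟪v, P (xs - t • v) - y₀⟫ ≤ ε * t * ‖v‖^2 + 2 * ε * ‖v‖ := by
      intro t htpos
      set zt : EuclideanSpace ℝ (Fin m) := xs - t • v with hzt
      have e1 : f zt = ⟪zt, P zt⟫ - ‖P zt‖^2/2 := hfP zt
      have e2 : ⟪xs, P zt⟫ - ‖P zt‖^2/2 ≤ f xs := hkey xs _ (hPK zt)
      have e3 : ⟪zt, P zt⟫ = ⟪xs, P zt⟫ - t * ⟪v, P zt⟫ := by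
        simp only [hzt]
        rw [inner_sub_left, real_inner_smul_left]
      have step1 : f zt ≤ f xs - t * ⟪v, P zt⟫ := by
        rw [e1, e3]
        linarith
      have e4 : ⟪zt, y₀⟫ = ⟪xs, y₀⟫ - t * ⟪v, y₀⟫ := by
        simp only [hzt]
        rw [inner_sub_left, real_inner_smul_left]
      have e5 : ‖zt - x₀‖^2 = ‖xs - x₀‖^2 - 2*t*⟪xs - x₀, v⟫ + t^2*‖v‖^2 := by
        have hzx : zt - x₀ = (xs - x₀) - t • v := by simp only [hzt]; module
        rw [hzx, norm_sub_sq_real, real_inner_smul_right, norm_smul, Real.norm_eq_abs,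
          mul_pow, sq_abs]
        ring
      have e6 : g xs ≤ g zt := hgmin zt
      have e6' : f xs - ⟪xs, y₀⟫ + ε * ‖xs - x₀‖^2 ≤ f zt - ⟪zt, y₀⟫ + ε * ‖zt - x₀‖^2 := by
        simpa only [hg, hq] using e6
      rw [e4, e5] at e6'
      have step2 : t * ⟪v, P zt⟫ - t * ⟪v, y₀⟫ ≤ ε * (t^2*‖v‖^2 - 2*t*⟪xs - x₀, v⟫) := by
        nlinarith [step1, e6']
      have step3 : ⟪v, P zt⟫ - ⟪v, y₀⟫ ≤ ε * (t*‖v‖^2 - 2*⟪xs - x₀, v⟫) := by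
        have h2' : t * (⟪v, P zt⟫ - ⟪v, y₀⟫) ≤ t * (ε * (t*‖v‖^2 - 2*⟪xs - x₀, v⟫)) := by
          nlinarith [step2]
        exact le_of_mul_le_mul_left h2' htpos
      have e7 : ⟪v, P zt - y₀⟫ = ⟪v, P zt⟫ - ⟪v, y₀⟫ := inner_sub_right _ _ _
      have e8 : -⟪xs - x₀, v⟫ ≤ ‖xs - x₀‖ * ‖v‖ := by
        have h1 := real_inner_le_norm (x₀ - xs) v
        have h2 : ⟪x₀ - xs, v⟫ = -⟪xs - x₀, v⟫ := by
          rw [← neg_sub, inner_neg_left]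
        have h3 : ‖x₀ - xs‖ = ‖xs - x₀‖ := norm_sub_rev _ _
        rw [h2, h3] at h1
        exact h1
      have e9 : ‖xs - x₀‖ * ‖v‖ ≤ 1 * ‖v‖ := mul_le_mul_of_nonneg_right hxs1 (norm_nonneg v)
      have e10 : ε * (-⟪xs - x₀, v⟫) ≤ ε * (1 * ‖v‖) :=
        mul_le_mul_of_nonneg_left (e8.trans e9) hε.le
      rw [e7]
      nlinarith [step3, e10]
    have hu : Tendsto (fun n : ℕ => xs - (1/(n+1:ℝ)) • v) atTop (𝓝 xs) := by
      have h1 : Tendsto (fun n : ℕ => (1/(n+1:ℝ))) atTop (𝓝 0) :=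
        tendsto_one_div_add_atTop_nhds_zero_nat
      have h2 : Tendsto (fun n : ℕ => (1/(n+1:ℝ)) • v) atTop (𝓝 ((0:ℝ) • v)) := h1.smul_const v
      rw [zero_smul] at h2
      have h3 := (tendsto_const_nhds (x := xs) (f := atTop (α := ℕ))).sub h2
      simpa using h3
    have hPt : Tendsto (fun n : ℕ => P (xs - (1/(n+1:ℝ)) • v)) atTop (𝓝 (P xs)) :=
      cheb_proj_tendsto hcl P hPK hPle hPu hu
    have hlim : Tendsto (fun n : ℕ => ⟪v, P (xs - (1/(n+1:ℝ)) • v) - y₀⟫) atTop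
        (𝓝 ⟪v, P xs - y₀⟫) :=
      Filter.Tendsto.inner tendsto_const_nhds (hPt.sub tendsto_const_nhds)
    have hlim2 : Tendsto (fun n : ℕ => ε * (1/(n+1:ℝ)) * ‖v‖^2 + 2*ε*‖v‖) atTop
        (𝓝 (2*ε*‖v‖)) := by
      have h1 : Tendsto (fun n : ℕ => ε * (1/(n+1:ℝ)) * ‖v‖^2) atTop (𝓝 0) := by
        have h2 := (tendsto_one_div_add_atTop_nhds_zero_nat.const_mul ε).mul_const (‖v‖^2)
        simpa [mul_assoc] using h2
      simpa using h1.add (tendsto_const_nhds (x := 2*ε*‖v‖))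
    have hfin : ⟪v, P xs - y₀⟫ ≤ 2*ε*‖v‖ :=
      le_of_tendsto_of_tendsto' hlim hlim2 fun n => ht _ (by positivity)
    have hvv : ⟪v, P xs - y₀⟫ = ‖v‖^2 := by
      rw [← hv]
      exact real_inner_self_eq_norm_sq v
    have hvle : ‖v‖ ≤ 2*ε := by nlinarith [norm_nonneg v]
    exact ⟨P xs, hPK xs, by rw [show P xs - y₀ = v from hv.symm]; exact hvle⟩
  have hyc : y₀ ∈ closure K := by
    rw [Metric.mem_closure_iff]
    intro ε hε
    obtain ⟨p, hpK, hp⟩ := main (ε/4) (by linarith)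
    refine ⟨p, hpK, ?_⟩
    rw [dist_eq_norm, norm_sub_rev]
    linarith
  rwa [hcl.closure_eq] at hyc

/-- A nonempty set `K ⊆ ℝ^m` is a Chebyshev set (every point has a unique best
approximation in `K`) if and only if `K` is closed and convex. -/
theorem chebyshev_iff_closed_convex {m : ℕ}
    (K : Set (EuclideanSpace ℝ (Fin m))) (hK : K.Nonempty) :
    (∀ b : EuclideanSpace ℝ (Fin m),
        ∃! y, y ∈ K ∧ ∀ z ∈ K, ‖y - b‖ ≤ ‖z - b‖) ↔
      IsClosed K ∧ Convex ℝ K := by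
  constructor
  · intro hC
    have hCe : ∀ b, ∃ y ∈ K, ∀ z ∈ K, ‖y - b‖ ≤ ‖z - b‖ := by
      intro b
      obtain ⟨y, hy, -⟩ := hC b
      exact ⟨y, hy.1, hy.2⟩
    have hcl := cheb_closed hCe
    choose P hP using fun b => (hC b).exists
    have hPu : ∀ b y, y ∈ K → (∀ z ∈ K, ‖y - b‖ ≤ ‖z - b‖) → y = P b := by
      intro b y hyK hy
      exact (hC b).unique ⟨hyK, hy⟩ (hP b)
    exact ⟨hcl, cheb_convex hcl P (fun b => (hP b).1) (fun b => (hP b).2) hPu⟩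
  · rintro ⟨hcl, hconv⟩ b
    obtain ⟨v, hvK, hv⟩ := exists_norm_eq_iInf_of_complete_convex hK hcl.isComplete hconv b
    have hbdd : BddBelow (Set.range fun w : K => ‖b - (w : EuclideanSpace ℝ (Fin m))‖) :=
      ⟨0, by rintro r ⟨w, rfl⟩; exact norm_nonneg _⟩
    have hmin : ∀ z ∈ K, ‖v - b‖ ≤ ‖z - b‖ := by
      intro z hz
      rw [norm_sub_rev]
      calc ‖b - v‖ = ⨅ w : K, ‖b - (w : EuclideanSpace ℝ (Fin m))‖ := hv
        _ ≤ ‖b - z‖ := ciInf_le hbdd ⟨z, hz⟩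
        _ = ‖z - b‖ := norm_sub_rev _ _
    refine ⟨v, ⟨hvK, hmin⟩, ?_⟩
    rintro y ⟨hyK, hy⟩
    have hd1 : ‖y - b‖ = ‖v - b‖ := le_antisymm (hy v hvK) (hmin y hyK)
    have hmp : (1/2:ℝ) • y + (1/2:ℝ) • v ∈ K :=
      hconv hyK hvK (by norm_num) (by norm_num) (by norm_num)
    have hle : ‖y - b‖ ≤ ‖(1/2:ℝ) • y + (1/2:ℝ) • v - b‖ := hy _ hmp
    have heq : (1/2:ℝ) • y + (1/2:ℝ) • v - b = (1/2:ℝ) • ((y - b) + (v - b)) := by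
      module
    have hnm : ‖(1/2:ℝ) • y + (1/2:ℝ) • v - b‖ = (1/2) * ‖(y - b) + (v - b)‖ := by
      rw [heq, norm_smul]
      norm_num
    rw [hnm] at hle
    have hpar := parallelogram_law_with_norm ℝ (y - b) (v - b)
    have hyv : (y - b) - (v - b) = y - v := by abel
    rw [hyv] at hpar
    have hA0 : (0:ℝ) ≤ ‖(y - b) + (v - b)‖ := norm_nonneg _
    have hsq : (2 * ‖y - b‖) * (2 * ‖y - b‖) ≤ ‖(y - b) + (v - b)‖ * ‖(y - b) + (v - b)‖ :=
      mul_self_le_mul_self (by positivity) (by linarith)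
    have h0 : ‖y - v‖ * ‖y - v‖ ≤ 0 := by nlinarith [hsq, hpar, hd1]
    have hzero : ‖y - v‖ = 0 := mul_self_eq_zero.mp (le_antisymm h0 (mul_self_nonneg _))
    rw [norm_eq_zero, sub_eq_zero] at hzero
    exact hzero
end

section
/- A matrix A = [a₁,…,a_m]ᵀ ∈ ℝ^{m×d} has the phase retrieval property on ℝ^d if and only if it has the complement property: for every subset I ⊆ {1,…,m}, either span{a_j : j ∈ I} = ℝ^d or span{a_j : j ∈ I^c} = ℝ^d. -/
open Submodule Matrix

/-- If a set spans the whole space and `z` is orthogonal to it, then `z = 0`. -/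
lemma dot_zero_of_span_top {d : ℕ} {S : Set (Fin d → ℝ)}
    (h : Submodule.span ℝ S = ⊤) {z : Fin d → ℝ}
    (hz : ∀ s ∈ S, s ⬝ᵥ z = 0) : z = 0 := by
  let f : (Fin d → ℝ) →ₗ[ℝ] ℝ :=
    { toFun := fun w => w ⬝ᵥ z
      map_add' := fun a b => add_dotProduct a b z
      map_smul' := fun c a => by simp [smul_dotProduct] }
  have hker : Submodule.span ℝ S ≤ LinearMap.ker f := by
    rw [Submodule.span_le]
    intro s hs
    simpa [f] using hz s hs
  have : z ⬝ᵥ z = 0 := by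
    have := hker (h ▸ Submodule.mem_top : z ∈ Submodule.span ℝ S)
    simpa [f] using this
  rwa [dotProduct_self_eq_zero] at this

/-- If a set does not span the whole space, there exists a nonzero vector
orthogonal to all of it. -/
lemma exists_dot_zero_of_span_ne_top {d : ℕ} {S : Set (Fin d → ℝ)}
    (h : Submodule.span ℝ S ≠ ⊤) :
    ∃ z : Fin d → ℝ, z ≠ 0 ∧ ∀ s ∈ S, s ⬝ᵥ z = 0 := by
  obtain ⟨f, hf, hfmap⟩ :=
    (Submodule.span ℝ S).exists_dual_map_eq_bot_of_lt_top (lt_top_iff_ne_top.mpr h)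
      inferInstance
  refine ⟨fun i => f (fun j => if i = j then 1 else 0), ?_, ?_⟩
  · intro hz
    apply hf
    refine LinearMap.ext fun x => ?_
    rw [LinearMap.pi_apply_eq_sum_univ f x]
    simp [funext_iff.mp hz]
  · intro s hs
    have hfs : f s = 0 := by
      have : f s ∈ (Submodule.span ℝ S).map f :=
        Submodule.mem_map_of_mem (Submodule.subset_span hs)
      rwa [hfmap, Submodule.mem_bot] at this
    rw [LinearMap.pi_apply_eq_sum_univ f s] at hfs
    simpa [dotProduct, mul_comm] using hfs

/-- A matrix `A = [a₁,…,a_m]ᵀ ∈ ℝ^{m×d}` has the phase retrieval property on `ℝ^d`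
if and only if it has the complement property: for every `I ⊆ {1,…,m}`, either
the rows indexed by `I` or the rows indexed by `Iᶜ` span `ℝ^d`. -/
theorem phase_retrieval_iff_complement_property {m d : ℕ}
    (A : Matrix (Fin m) (Fin d) ℝ) :
    (∀ x y : Fin d → ℝ,
        (∀ j, |A.mulVec x j| = |A.mulVec y j|) → x = y ∨ x = -y) ↔
      (∀ I : Set (Fin m),
        Submodule.span ℝ ((fun j => A j) '' I) = ⊤ ∨
        Submodule.span ℝ ((fun j => A j) '' Iᶜ) = ⊤) := by
  constructor
  · intro hPR I
    by_contra hcon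
    push_neg at hcon
    obtain ⟨h1, h2⟩ := hcon
    obtain ⟨u, hu0, hu⟩ := exists_dot_zero_of_span_ne_top h1
    obtain ⟨v, hv0, hv⟩ := exists_dot_zero_of_span_ne_top h2
    have hIu : ∀ j ∈ I, A j ⬝ᵥ u = 0 := fun j hj => hu _ ⟨j, hj, rfl⟩
    have hIv : ∀ j ∈ Iᶜ, A j ⬝ᵥ v = 0 := fun j hj => hv _ ⟨j, hj, rfl⟩
    have habs : ∀ j, |A.mulVec (u + v) j| = |A.mulVec (u - v) j| := by
      intro j
      by_cases hj : j ∈ I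
      · simp [Matrix.mulVec, dotProduct_add, dotProduct_sub, hIu j hj]
      · simp [Matrix.mulVec, dotProduct_add, dotProduct_sub, hIv j hj]
    rcases hPR _ _ habs with h | h
    · apply hv0
      have : v + v = 0 := by
        have := sub_eq_zero.mpr h
        simpa [add_sub_sub_cancel] using this
      have h2 : (2 : ℝ) • v = 0 := by rw [two_smul]; exact this
      simpa using h2
    · apply hu0
      have : u + u = 0 := by
        have : u + v + (u - v) = 0 := by rw [h]; simp
        simpa [add_add_sub_cancel] using this
      have h2 : (2 : ℝ) • u = 0 := by rw [two_smul]; exact this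
      simpa using h2
  · intro hCP x y habs
    set I : Set (Fin m) := {j | A.mulVec x j = A.mulVec y j} with hI
    rcases hCP I with h | h
    · left
      have : x - y = 0 := by
        apply dot_zero_of_span_top h
        rintro s ⟨j, hj, rfl⟩
        have : A j ⬝ᵥ x - A j ⬝ᵥ y = 0 := by
          have := hj
          simp only [hI, Set.mem_setOf_eq, Matrix.mulVec] at this
          rw [this]; ring
        simpa [dotProduct_sub] using this
      exact sub_eq_zero.mp this
    · right
      have : x + y = 0 := by
        apply dot_zero_of_span_top h
        rintro s ⟨j, hj, rfl⟩
        have hne : A.mulVec x j ≠ A.mulVec y j := hj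
        have := (abs_eq_abs.mp (habs j)).resolve_left hne
        simp only [Matrix.mulVec] at this
        simp [dotProduct_add, this]
      exact eq_neg_of_add_eq_zero_left this
end

section
/- Suppose A ∈ ℝ^{m×d} and b ∈ ℝ₊^m. If x̂ ∈ ℝ^d is a global minimizer of ‖|Ax| − b‖² over x ∈ ℝ^d and AᵀA is invertible, then x̂ satisfies the fixed-point equation x̂ = (AᵀA)⁻¹Aᵀ(b ⊙ s(Ax̂)), where s(Ax̂) is the entrywise sign of Ax̂ (with sign 0 taken as 1) and ⊙ is the entrywise product. -/
open Finset Matrix in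
/-- Any global minimizer `xhat` of `‖|Ax| − b‖²` with `b ≥ 0` and `AᵀA` invertible
satisfies the fixed-point equation `xhat = (AᵀA)⁻¹Aᵀ(b ⊙ s(Axhat))`. -/
theorem fixed_point_equation {m d : ℕ}
    (A : Matrix (Fin m) (Fin d) ℝ) (b : Fin m → ℝ)
    (hb : ∀ i, 0 ≤ b i)
    (hinv : IsUnit (Aᵀ * A))
    (xhat : Fin d → ℝ)
    (hmin : ∀ x : Fin d → ℝ,
      ∑ i, (|A.mulVec xhat i| - b i) ^ 2 ≤ ∑ i, (|A.mulVec x i| - b i) ^ 2) :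
    xhat = (Aᵀ * A)⁻¹.mulVec (Aᵀ.mulVec (fun i =>
      b i * (if A.mulVec xhat i = 0 then 1 else A.mulVec xhat i / |A.mulVec xhat i|))) := by
  set y := A.mulVec xhat with hy
  set σ : Fin m → ℝ := fun i => if y i = 0 then 1 else y i / |y i| with hσ
  set c : Fin m → ℝ := fun i => b i * σ i with hc
  have hσy : ∀ i, σ i * y i = |y i| := by
    intro i
    by_cases h : y i = 0
    · simp [hσ, h]
    · have hne : |y i| ≠ 0 := abs_ne_zero.mpr h
      have hs : σ i = y i / |y i| := by simp [hσ, h]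
      rw [hs, div_mul_eq_mul_div, ← abs_mul_abs_self, mul_div_assoc, div_self hne, mul_one]
  have hσsq : ∀ i, σ i * σ i = 1 := by
    intro i
    by_cases h : y i = 0
    · simp [hσ, h]
    · have hne : |y i| ≠ 0 := abs_ne_zero.mpr h
      have hs : σ i = y i / |y i| := by simp [hσ, h]
      rw [hs, div_mul_div_comm, ← abs_mul_abs_self, div_self (mul_ne_zero hne hne)]
  have key : ∀ (i : Fin m) (z : ℝ), (|z| - b i) ^ 2 ≤ (z - c i) ^ 2 := by
    intro i z
    have h1 : σ i * z ≤ |z| := by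
      calc σ i * z ≤ |σ i * z| := le_abs_self _
        _ = |σ i| * |z| := abs_mul _ _
        _ = |z| := by
            have hone : |σ i| = 1 := by
              have := hσsq i
              nlinarith [abs_nonneg (σ i), sq_abs (σ i)]
            rw [hone, one_mul]
    have hb' := hb i
    have h3 : (z - b i * σ i) ^ 2 = z ^ 2 - 2 * b i * (σ i * z) + b i ^ 2 := by
      linear_combination (b i) ^ 2 * hσsq i
    simp only [hc]
    rw [h3]
    nlinarith [sq_abs z, mul_nonneg hb' (sub_nonneg.2 h1)]
  have heq : ∀ i, (|y i| - b i) ^ 2 = (y i - c i) ^ 2 := by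
    intro i
    simp only [hc]
    linear_combination sq_abs (y i) + 2 * b i * hσy i - (b i) ^ 2 * hσsq i
  have hglb : ∀ x : Fin d → ℝ,
      ∑ i, (y i - c i) ^ 2 ≤ ∑ i, (A.mulVec x i - c i) ^ 2 := by
    intro x
    calc ∑ i, (y i - c i) ^ 2 = ∑ i, (|y i| - b i) ^ 2 :=
          Finset.sum_congr rfl fun i _ => (heq i).symm
      _ ≤ ∑ i, (|A.mulVec x i| - b i) ^ 2 := hmin x
      _ ≤ ∑ i, (A.mulVec x i - c i) ^ 2 :=
          Finset.sum_le_sum fun i _ => key i (A.mulVec x i)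
  have hr : ∀ j, ∑ i, (y i - c i) * A i j = 0 := by
    intro j
    set B := ∑ i, (y i - c i) * A i j with hB
    set C := ∑ i, (A i j) ^ 2 with hC
    have hC0 : 0 ≤ C := Finset.sum_nonneg fun i _ => sq_nonneg _
    have ht : ∀ t : ℝ, 0 ≤ 2 * t * B + t ^ 2 * C := by
      intro t
      have h := hglb (xhat + t • (Pi.single j 1 : Fin d → ℝ))
      have hmv : ∀ i, A.mulVec (xhat + t • (Pi.single j 1 : Fin d → ℝ)) i
          = y i + t * A i j := by
        intro i
        rw [Matrix.mulVec_add, Matrix.mulVec_smul, Matrix.mulVec_single]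
        simp [hy, mul_comm]
      have expand : ∑ i, (A.mulVec (xhat + t • (Pi.single j 1 : Fin d → ℝ)) i - c i) ^ 2
          = ∑ i, (y i - c i) ^ 2 + (2 * t * B + t ^ 2 * C) := by
        simp only [hmv, hB, hC, Finset.mul_sum]
        rw [← Finset.sum_add_distrib, ← Finset.sum_add_distrib]
        exact Finset.sum_congr rfl fun i _ => by ring
      rw [expand] at h
      linarith
    by_contra hBne
    have h := ht (-B / (C + 1))
    have hC1 : (0:ℝ) < C + 1 := by linarith
    have hval : 2 * (-B / (C + 1)) * B + (-B / (C + 1)) ^ 2 * C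
        = B ^ 2 * (-C - 2) / (C + 1) ^ 2 := by
      field_simp
      ring
    rw [hval] at h
    rw [le_div_iff₀ (by positivity)] at h
    have hB2 : 0 < B ^ 2 := by positivity
    nlinarith
  have hnormal : (Aᵀ * A).mulVec xhat = Aᵀ.mulVec c := by
    rw [← Matrix.mulVec_mulVec, ← hy]
    funext j
    simp only [Matrix.mulVec, dotProduct, Matrix.transpose_apply]
    have h0 := hr j
    have h2 : ∑ i, (y i - c i) * A i j = ∑ i, A i j * y i - ∑ i, A i j * c i := by
      rw [← Finset.sum_sub_distrib]
      exact Finset.sum_congr rfl fun i _ => by ring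
    rw [h2] at h0
    linarith
  have hdet : IsUnit (Aᵀ * A).det := (Matrix.isUnit_iff_isUnit_det _).mp hinv
  show xhat = (Aᵀ * A)⁻¹.mulVec (Aᵀ.mulVec c)
  rw [← hnormal, Matrix.mulVec_mulVec, Matrix.nonsing_inv_mul _ hdet, Matrix.one_mulVec]
end

section
/- Let A ∈ ℝ^{m×d} have the phase retrieval property. Then for every b ∈ ℝ^m, the set of solutions (up to sign) of argmin_{x ∈ ℝ^d} ‖|Ax| − b‖² is finite, with at most 2^m elements. -/
open Finset

private lemma key_lemma {m d : ℕ} (A : Matrix (Fin m) (Fin d) ℝ) (b : Fin m → ℝ)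
    (x y : Fin d → ℝ)
    (hx : ∀ w : Fin d → ℝ,
      ∑ i, (|A.mulVec x i| - b i) ^ 2 ≤ ∑ i, (|A.mulVec w i| - b i) ^ 2)
    (hy : ∀ w : Fin d → ℝ,
      ∑ i, (|A.mulVec y i| - b i) ^ 2 ≤ ∑ i, (|A.mulVec w i| - b i) ^ 2)
    (hsign : ∀ i, (0 ≤ A.mulVec x i ↔ 0 ≤ A.mulVec y i)) :
    ∀ i, |A.mulVec x i| = |A.mulVec y i| := by
  set u := A.mulVec x with hu
  set v := A.mulVec y with hv
  set z := (2⁻¹ : ℝ) • (x + y) with hzdef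
  have hz : ∀ i, A.mulVec z i = (u i + v i) / 2 := by
    intro i
    have : A.mulVec z = (2⁻¹ : ℝ) • (u + v) := by
      rw [hzdef, Matrix.mulVec_smul, Matrix.mulVec_add]
    rw [this]
    simp [Pi.smul_apply]
    ring
  have habs : ∀ i, |A.mulVec z i| = (|u i| + |v i|) / 2 := by
    intro i
    rw [hz i]
    by_cases h : 0 ≤ u i
    · have h' : 0 ≤ v i := (hsign i).mp h
      rw [abs_of_nonneg h, abs_of_nonneg h', abs_of_nonneg (by linarith)]
    · push_neg at h
      have h' : v i < 0 := by
        by_contra hc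
        push_neg at hc
        exact absurd ((hsign i).mpr hc) (not_le.mpr h)
      rw [abs_of_neg h, abs_of_neg h', abs_of_neg (by linarith)]
      ring
  -- sum inequality
  have h1 := hx z
  have h2 := hy z
  have hSz : ∑ i, (|A.mulVec z i| - b i) ^ 2
      = ∑ i, ((|u i| + |v i|) / 2 - b i) ^ 2 := by
    apply Finset.sum_congr rfl
    intro i _
    rw [habs i]
  rw [hSz] at h1 h2
  have hsum : ∑ i, ((|u i| - |v i|) ^ 2 / 2) ≤ 0 := by
    have hexp : ∑ i, ((|u i| - |v i|) ^ 2 / 2)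
        = ∑ i, (|u i| - b i) ^ 2 + ∑ i, (|v i| - b i) ^ 2
          - 2 * ∑ i, ((|u i| + |v i|) / 2 - b i) ^ 2 := by
      rw [← Finset.sum_add_distrib, Finset.mul_sum, ← Finset.sum_sub_distrib]
      apply Finset.sum_congr rfl
      intro i _
      ring
    rw [hexp]
    linarith
  have hzero : ∀ i ∈ Finset.univ, ((|u i| - |v i|) ^ 2 / 2 : ℝ) = 0 := by
    have hnn : ∀ i ∈ (Finset.univ : Finset (Fin m)), (0:ℝ) ≤ (|u i| - |v i|) ^ 2 / 2 :=
      fun i _ => by positivity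
    have := Finset.sum_nonneg hnn
    have heq : ∑ i, ((|u i| - |v i|) ^ 2 / 2) = 0 := le_antisymm hsum this
    exact (Finset.sum_eq_zero_iff_of_nonneg hnn).mp heq
  intro i
  have := hzero i (Finset.mem_univ i)
  have h3 : (|u i| - |v i|) ^ 2 = 0 := by linarith
  have := pow_eq_zero_iff (n := 2) (by norm_num) |>.mp h3
  linarith

open Finset in
/-- If `A ∈ ℝ^{m×d}` has the phase retrieval property, then for every `b ∈ ℝ^m`
the solution set of `argmin_x ‖|Ax| − b‖²` is finite up to sign, with at most
`2^m` elements. -/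
theorem solutions_finite {m d : ℕ}
    (A : Matrix (Fin m) (Fin d) ℝ)
    (hPR : ∀ x y : Fin d → ℝ,
      (fun i => |A.mulVec x i|) = (fun i => |A.mulVec y i|) → x = y ∨ x = -y)
    (b : Fin m → ℝ) :
    ∃ T : Finset (Fin d → ℝ), T.card ≤ 2 ^ m ∧
      ∀ x₁ : Fin d → ℝ,
        (∀ x : Fin d → ℝ,
          ∑ i, (|A.mulVec x₁ i| - b i) ^ 2 ≤ ∑ i, (|A.mulVec x i| - b i) ^ 2) →
        ∃ y ∈ T, x₁ = y ∨ x₁ = -y := by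
  classical
  set P : (Fin d → ℝ) → Prop := fun x => ∀ w : Fin d → ℝ,
    ∑ i, (|A.mulVec x i| - b i) ^ 2 ≤ ∑ i, (|A.mulVec w i| - b i) ^ 2 with hP
  set Q : (Fin d → ℝ) → (Fin m → Bool) → Prop :=
    fun x p => ∀ i, (p i = true ↔ 0 ≤ A.mulVec x i) with hQ
  set f : (Fin m → Bool) → (Fin d → ℝ) := fun p =>
    if h : ∃ x, P x ∧ Q x p then h.choose else 0 with hf
  refine ⟨Finset.image f Finset.univ, ?_, ?_⟩
  · calc (Finset.image f Finset.univ).card ≤ (Finset.univ : Finset (Fin m → Bool)).card :=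
        Finset.card_image_le
      _ = 2 ^ m := by simp
  · intro x₁ hmin
    set p : Fin m → Bool := fun i => decide (0 ≤ A.mulVec x₁ i) with hp
    have hex : ∃ x, P x ∧ Q x p := ⟨x₁, hmin, fun i => by simp [hp]⟩
    refine ⟨f p, Finset.mem_image_of_mem f (Finset.mem_univ p), ?_⟩
    have hfp : f p = hex.choose := by rw [hf]; simp [hex]
    obtain ⟨hPy, hQy⟩ := hex.choose_spec
    set y := hex.choose
    have hsign : ∀ i, (0 ≤ A.mulVec x₁ i ↔ 0 ≤ A.mulVec y i) := by
      intro i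
      constructor
      · intro h
        exact (hQy i).mp (by simp [hp, h])
      · intro h
        have := (hQy i).mpr h
        simpa [hp] using this
    have habs := key_lemma A b x₁ y hmin hPy hsign
    rcases hPR x₁ y (funext habs) with h | h
    · rw [hfp]; exact Or.inl h
    · rw [hfp]; exact Or.inr h
end

section
/- Let A ∈ ℝ^{m×d} have the phase retrieval property. Then the set of b ∈ ℝ₊^m for which argmin_{x ∈ ℝ^d} ‖|Ax| − b‖² has more than one solution (up to sign) has Lebesgue measure zero in ℝ^m. -/
open Metric in
/-- If the distance function to a set `s` is differentiable at `b`, then `b` has at most one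
nearest point in `s`. -/
theorem nearest_unique_aux {m : ℕ} {s : Set (EuclideanSpace ℝ (Fin m))}
    {b v₁ v₂ : EuclideanSpace ℝ (Fin m)}
    (hd : DifferentiableAt ℝ (fun c => infDist c s) b)
    (h₁ : v₁ ∈ s) (h₂ : v₂ ∈ s)
    (e₁ : infDist b s = dist b v₁) (e₂ : infDist b s = dist b v₂) :
    v₁ = v₂ := by
  set f : EuclideanSpace ℝ (Fin m) → ℝ := fun c => infDist c s with hf
  set g : EuclideanSpace ℝ (Fin m) → ℝ := fun c => ‖c‖ ^ 2 - f c * f c with hg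
  have hgd : DifferentiableAt ℝ g b := (differentiableAt_id.norm_sq ℝ).sub (hd.mul hd)
  have key : ∀ v ∈ s, infDist b s = dist b v →
      ∀ c, fderiv ℝ g b c = 2 * (inner ℝ v c : ℝ) := by
    intro v hv hev c
    set φ : EuclideanSpace ℝ (Fin m) → ℝ := fun c => 2 * (inner ℝ v c : ℝ) - ‖v‖ ^ 2 with hφ
    have hφd : HasFDerivAt φ ((2 : ℝ) • innerSL ℝ v) b :=
      ((innerSL ℝ v).hasFDerivAt.const_mul 2).sub_const _
    have algebra : ∀ c : EuclideanSpace ℝ (Fin m),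
        ‖c - v‖ * ‖c - v‖ = ‖c‖ ^ 2 - (2 * (inner ℝ v c : ℝ) - ‖v‖ ^ 2) := by
      intro c
      have := norm_sub_sq_real c v
      have hcomm : (inner ℝ c v : ℝ) = (inner ℝ v c : ℝ) := real_inner_comm v c
      nlinarith [this]
    have hmin : IsLocalMin (fun c => g c - φ c) b := by
      apply IsMinOn.isLocalMin (s := Set.univ) _ Filter.univ_mem
      intro c _
      simp only [Set.mem_setOf_eq, hg, hφ]
      have hle : f c ≤ dist c v := infDist_le_dist_of_mem hv
      have hnn : 0 ≤ f c := infDist_nonneg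
      have h1 : f c * f c ≤ ‖c - v‖ * ‖c - v‖ := by
        rw [← dist_eq_norm]; exact mul_self_le_mul_self hnn hle
      have hb0 : f b * f b = ‖b - v‖ * ‖b - v‖ := by
        rw [← dist_eq_norm, hf]; simp [hev]
      have := algebra c
      have := algebra b
      nlinarith
    have h0 : fderiv ℝ (fun c => g c - φ c) b = 0 := hmin.fderiv_eq_zero
    have : fderiv ℝ (fun c => g c - φ c) b = fderiv ℝ g b - (2 : ℝ) • innerSL ℝ v := by
      rw [fderiv_fun_sub hgd hφd.differentiableAt, hφd.fderiv]
    rw [this] at h0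
    have := sub_eq_zero.1 h0
    calc fderiv ℝ g b c = ((2 : ℝ) • innerSL ℝ v) c := by rw [this]
      _ = 2 * (inner ℝ v c : ℝ) := by simp
  have hvv : (inner ℝ v₁ (v₁ - v₂) : ℝ) = (inner ℝ v₂ (v₁ - v₂) : ℝ) := by
    have := (key v₁ h₁ e₁ (v₁ - v₂)).symm.trans (key v₂ h₂ e₂ (v₁ - v₂))
    linarith
  have : (inner ℝ (v₁ - v₂) (v₁ - v₂) : ℝ) = 0 := by
    rw [inner_sub_left]; linarith
  rwa [inner_self_eq_zero, sub_eq_zero] at this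

open Finset MeasureTheory in
/-- If `A ∈ ℝ^{m×d}` has the phase retrieval property, then the set of
`b ∈ ℝ₊^m` for which `argmin_x ‖|Ax| − b‖²` has more than one solution up to
sign has Lebesgue measure zero. -/
theorem nonuniqueness_set_measure_zero {m d : ℕ}
    (A : Matrix (Fin m) (Fin d) ℝ)
    (hPR : ∀ x y : Fin d → ℝ,
      (fun i => |A.mulVec x i|) = (fun i => |A.mulVec y i|) → x = y ∨ x = -y) :
    volume {b : EuclideanSpace ℝ (Fin m) | (∀ i, 0 ≤ b i) ∧
      ∃ x₁ x₂ : Fin d → ℝ,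
        (∀ x : Fin d → ℝ,
          ∑ i, (|A.mulVec x₁ i| - b i) ^ 2 ≤ ∑ i, (|A.mulVec x i| - b i) ^ 2) ∧
        (∀ x : Fin d → ℝ,
          ∑ i, (|A.mulVec x₂ i| - b i) ^ 2 ≤ ∑ i, (|A.mulVec x i| - b i) ^ 2) ∧
        x₁ ≠ x₂ ∧ x₁ ≠ -x₂} = 0 := by
  classical
  open Metric in
  set v : (Fin d → ℝ) → EuclideanSpace ℝ (Fin m) :=
    fun x => WithLp.toLp 2 (fun i => |A.mulVec x i| : Fin m → ℝ) with hv
  set S : Set (EuclideanSpace ℝ (Fin m)) := Set.range v with hS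
  have hSne : S.Nonempty := ⟨v 0, ⟨0, rfl⟩⟩
  have hnull : volume {b : EuclideanSpace ℝ (Fin m) |
      ¬ DifferentiableAt ℝ (fun c => Metric.infDist c S) b} = 0 := by
    have := (Metric.lipschitz_infDist_pt S).ae_differentiableAt (μ := volume)
    rwa [MeasureTheory.ae_iff] at this
  refine measure_mono_null ?_ hnull
  rintro b ⟨-, x₁, x₂, hm₁, hm₂, hne, hne'⟩
  intro hd
  have hdist : ∀ x : Fin d → ℝ,
      dist b (v x) = Real.sqrt (∑ i, (|A.mulVec x i| - b i) ^ 2) := by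
    intro x
    rw [EuclideanSpace.dist_eq]
    congr 1
    refine Finset.sum_congr rfl fun i _ => ?_
    rw [Real.dist_eq, sq_abs]
    ring
  have hmono : ∀ x₀ : Fin d → ℝ, (∀ x : Fin d → ℝ,
      ∑ i, (|A.mulVec x₀ i| - b i) ^ 2 ≤ ∑ i, (|A.mulVec x i| - b i) ^ 2) →
      Metric.infDist b S = dist b (v x₀) := by
    intro x₀ h
    refine le_antisymm (Metric.infDist_le_dist_of_mem ⟨x₀, rfl⟩) ?_
    by_contra hlt
    push_neg at hlt
    obtain ⟨y, ⟨x, rfl⟩, hy⟩ := (Metric.infDist_lt_iff hSne).1 hlt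
    have : dist b (v x₀) ≤ dist b (v x) := by
      rw [hdist, hdist]; exact Real.sqrt_le_sqrt (h x)
    exact absurd (this.trans_lt hy) (lt_irrefl _)
  have hveq : v x₁ = v x₂ :=
    nearest_unique_aux hd ⟨x₁, rfl⟩ ⟨x₂, rfl⟩ (hmono x₁ hm₁) (hmono x₂ hm₂)
  rcases hPR x₁ x₂ (funext fun i => congrFun (congrArg WithLp.ofLp hveq) i) with h | h
  · exact hne h
  · exact hne' h
end

section
/- Let K ⊆ ℝ^m be a nonempty closed set, b₀ ∈ ℝ^m, and let y₁ ∈ K be a best approximation to b₀ from K. Then for every λ ∈ (0,1), the point λy₁ + (1−λ)b₀ has y₁ as its unique best approximation in K. -/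
/-- If `y₁` is a best approximation to `b₀` from a nonempty closed set `K`, then
for every `λ ∈ (0,1)` the point `λ y₁ + (1−λ) b₀` has `y₁` as its unique best
approximation in `K`. -/
theorem best_approx_along_segment_unique {m : ℕ}
    (K : Set (EuclideanSpace ℝ (Fin m))) (hK : K.Nonempty) (hKc : IsClosed K)
    (b₀ : EuclideanSpace ℝ (Fin m)) (y₁ : EuclideanSpace ℝ (Fin m))
    (hy₁ : y₁ ∈ K ∧ ∀ z ∈ K, ‖y₁ - b₀‖ ≤ ‖z - b₀‖)
    (lam : ℝ) (hlam : lam ∈ Set.Ioo (0 : ℝ) 1) :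
    (∀ z ∈ K, ‖y₁ - (lam • y₁ + (1 - lam) • b₀)‖ ≤
        ‖z - (lam • y₁ + (1 - lam) • b₀)‖) ∧
    ∀ y, (y ∈ K ∧ ∀ z ∈ K, ‖y - (lam • y₁ + (1 - lam) • b₀)‖ ≤
        ‖z - (lam • y₁ + (1 - lam) • b₀)‖) → y = y₁ := by
  obtain ⟨hy₁K, hy₁min⟩ := hy₁
  obtain ⟨hl0, hl1⟩ := hlam
  set b : EuclideanSpace ℝ (Fin m) := lam • y₁ + (1 - lam) • b₀ with hb
  set d : ℝ := ‖y₁ - b₀‖ with hd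
  have hby : y₁ - b = (1 - lam) • (y₁ - b₀) := by rw [hb]; module
  have hbb : b - b₀ = lam • (y₁ - b₀) := by rw [hb]; module
  have hnyb : ‖y₁ - b‖ = (1 - lam) * d := by
    rw [hby, norm_smul, Real.norm_eq_abs, abs_of_pos (by linarith : (0:ℝ) < 1 - lam)]
  have hnbb : ‖b - b₀‖ = lam * d := by
    rw [hbb, norm_smul, Real.norm_eq_abs, abs_of_pos hl0]
  have key : ∀ z ∈ K, ‖y₁ - b‖ ≤ ‖z - b‖ := by
    intro z hz
    have h1 : ‖z - b₀‖ ≤ ‖z - b‖ + ‖b - b₀‖ := norm_sub_le_norm_sub_add_norm_sub z b b₀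
    have h2 : d ≤ ‖z - b₀‖ := hy₁min z hz
    rw [hnyb]; linarith [hnbb]
  refine ⟨key, ?_⟩
  rintro y ⟨hyK, hymin⟩
  have h1 : ‖y - b‖ ≤ (1 - lam) * d := hnyb ▸ hymin y₁ hy₁K
  have h2 : d ≤ ‖y - b₀‖ := hy₁min y hyK
  have h3 : ‖y - b₀‖ ≤ ‖y - b‖ + ‖b - b₀‖ := norm_sub_le_norm_sub_add_norm_sub y b b₀
  rcases eq_or_lt_of_le (norm_nonneg (y₁ - b₀)) with hd0 | hd0
  · -- d = 0 : y₁ = b₀ = b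
    have hd0' : d = 0 := by rw [hd, ← hd0]
    have hyb₀ : y₁ = b₀ := norm_sub_eq_zero_iff.mp hd0.symm
    have hby₁ : b = y₁ := by rw [hb, hyb₀]; module
    have hle : ‖y - b‖ ≤ 0 := by rw [hd0'] at h1; linarith
    have hyb' : ‖y - b‖ = 0 := le_antisymm hle (norm_nonneg _)
    rw [norm_sub_eq_zero_iff] at hyb'
    rw [hyb', hby₁]
  · -- d > 0
    rw [← hd] at hd0
    have heq1 : ‖y - b‖ = (1 - lam) * d := by
      have : d ≤ ‖y - b‖ + lam * d := by rw [← hnbb]; linarith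
      linarith
    have heqtri : ‖(y - b) + (b - b₀)‖ = ‖y - b‖ + ‖b - b₀‖ := by
      have : (y - b) + (b - b₀) = y - b₀ := by abel
      rw [this]; linarith [hnbb]
    have hsr : SameRay ℝ (y - b) (b - b₀) := sameRay_iff_norm_add.mpr heqtri
    have hub : y - b ≠ 0 := by
      intro h
      rw [h, norm_zero] at heq1
      nlinarith
    have hvb : b - b₀ ≠ 0 := by
      intro h
      rw [h, norm_zero] at hnbb
      nlinarith
    obtain ⟨r, hr, hreq⟩ := hsr.exists_pos_left hub hvb
    -- hreq : r • (y - b) = b - b₀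
    have hnorm : r * ((1 - lam) * d) = lam * d := by
      have := congrArg norm hreq
      rwa [norm_smul, Real.norm_eq_abs, abs_of_pos hr, heq1, hnbb] at this
    have hrval : r = lam / (1 - lam) := by
      have h1lam : (1:ℝ) - lam ≠ 0 := by linarith
      rw [eq_div_iff h1lam]
      nlinarith
    rw [hrval, hbb] at hreq
    have h1lam : (1:ℝ) - lam ≠ 0 := by linarith
    have hlne : lam ≠ 0 := ne_of_gt hl0
    have hthis := congrArg (fun v : EuclideanSpace ℝ (Fin m) => ((1 - lam)/lam) • v) hreq
    simp only [smul_smul] at hthis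
    have e1 : (1 - lam)/lam * (lam/(1-lam)) = 1 := by field_simp
    have e2 : (1 - lam)/lam * lam = 1 - lam := by field_simp
    rw [e1, e2, one_smul] at hthis
    have hfinal : y - b = y₁ - b := by rw [hthis, hby]
    exact sub_left_injective hfinal
end
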